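/- Let G be a (P2+P3, complement-of-(P2+P3))-free graph containing an induced 4-cycle C with vertices v1,v2,v3,v4 in cyclic order. For i in {1,2,3,4}, let B_i = {v outside C : N(v) ∩ C = {v_i, v_{i+1}}} and for j in {1,2} let X_j = {v : N(v) ∩ C = {v_j, v_{j+2}}}. Then B := B_1 ∪ B_2 ∪ B_3 ∪ B_4 is anticomplete to X := X_1 ∪ X_2, i.e., there are no edges between B and X. -/

import Mathlib

open SimpleGraph

/-- `P2 + P3`: disjoint union of a 2-vertex path and a 3-vertex path. -/
def p2p3 : SimpleGraph (Fin 5) :=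
  SimpleGraph.fromRel fun a b =>
    (a = 0 ∧ b = 1) ∨ (a = 2 ∧ b = 3) ∨ (a = 3 ∧ b = 4)

/-- `G` contains no induced copy of `H`. -/
def InducedFree {α β : Type*} (H : SimpleGraph α) (G : SimpleGraph β) : Prop :=
  ¬ ∃ f : α ↪ β, ∀ a b, H.Adj a b ↔ G.Adj (f a) (f b)

/-- `s` is a stable (independent) set in `G`. -/
def StableSet {V : Type*} (G : SimpleGraph V) (s : Set V) : Prop :=
  s.Pairwise fun a b => ¬ G.Adj a b

/-- `v 0, v 1, v 2, v 3` are the vertices, in cyclic order, of an induced 4-cycle in `G`. -/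
def InducedC4 {V : Type*} (G : SimpleGraph V) (v : Fin 4 → V) : Prop :=
  Function.Injective v ∧ (∀ i : Fin 4, G.Adj (v i) (v (i + 1))) ∧
    ¬ G.Adj (v 0) (v 2) ∧ ¬ G.Adj (v 1) (v 3)

/-- `A_i`: vertices outside the cycle whose unique neighbour on the cycle is `v i`. -/
def vertA {V : Type*} (G : SimpleGraph V) (v : Fin 4 → V) (i : Fin 4) : Set V :=
  {x | x ∉ Set.range v ∧ ∀ j, G.Adj x (v j) ↔ j = i}

/-- `B_i`: vertices outside the cycle whose neighbours on the cycle are exactly `v i, v (i+1)`. -/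
def vertB {V : Type*} (G : SimpleGraph V) (v : Fin 4 → V) (i : Fin 4) : Set V :=
  {x | x ∉ Set.range v ∧ ∀ j, G.Adj x (v j) ↔ (j = i ∨ j = i + 1)}

/-- `X_j`: vertices outside the cycle whose neighbours on the cycle are exactly `v j, v (j+2)`. -/
def vertX {V : Type*} (G : SimpleGraph V) (v : Fin 4 → V) (j : Fin 4) : Set V :=
  {x | x ∉ Set.range v ∧ ∀ k, G.Adj x (v k) ↔ (k = j ∨ k = j + 2)}

/-- `T`: vertices outside the cycle with no neighbour on the cycle. -/
def vertT {V : Type*} (G : SimpleGraph V) (v : Fin 4 → V) : Set V :=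
  {x | x ∉ Set.range v ∧ ∀ j, ¬ G.Adj x (v j)}

/-- `D`: vertices complete to the cycle. -/
def vertD {V : Type*} (G : SimpleGraph V) (v : Fin 4 → V) : Set V :=
  {x | ∀ j, G.Adj x (v j)}

instance : DecidableRel p2p3.Adj := fun a b =>
  decidable_of_iff _ (SimpleGraph.fromRel_adj _ a b).symm

instance : DecidableRel p2p3ᶜ.Adj := fun a b =>
  decidable_of_iff _ (SimpleGraph.compl_adj p2p3 a b).symm

lemma nocomp {V : Type*} {G : SimpleGraph V} (h2 : InducedFree p2p3ᶜ G)
    (a : Fin 5 → V)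
    (e02 : G.Adj (a 0) (a 2)) (e03 : G.Adj (a 0) (a 3)) (e04 : G.Adj (a 0) (a 4))
    (e12 : G.Adj (a 1) (a 2)) (e13 : G.Adj (a 1) (a 3)) (e14 : G.Adj (a 1) (a 4))
    (e24 : G.Adj (a 2) (a 4))
    (n01 : ¬ G.Adj (a 0) (a 1)) (n23 : ¬ G.Adj (a 2) (a 3)) (n34 : ¬ G.Adj (a 3) (a 4))
    (d01 : a 0 ≠ a 1) (d23 : a 2 ≠ a 3) (d34 : a 3 ≠ a 4) : False := by
  apply h2
  have inj : Function.Injective a := by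
    intro p q h
    fin_cases p <;> fin_cases q <;>
      first
        | rfl
        | exact absurd h (by first
            | exact d01 | exact d23 | exact d34
            | exact d01.symm | exact d23.symm | exact d34.symm
            | exact e02.ne | exact e03.ne | exact e04.ne | exact e12.ne
            | exact e13.ne | exact e14.ne | exact e24.ne
            | exact e02.ne.symm | exact e03.ne.symm | exact e04.ne.symm
            | exact e12.ne.symm | exact e13.ne.symm | exact e14.ne.symm
            | exact e24.ne.symm)
  refine ⟨⟨a, inj⟩, fun p q => ?_⟩
  fin_cases p <;> fin_cases q <;>
    first
      | exact iff_of_true (by decide) (by first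
          | exact e02 | exact e03 | exact e04 | exact e12 | exact e13
          | exact e14 | exact e24
          | exact e02.symm | exact e03.symm | exact e04.symm | exact e12.symm
          | exact e13.symm | exact e14.symm | exact e24.symm)
      | exact iff_of_false (by decide) (by first
          | exact G.irrefl
          | exact n01 | exact n23 | exact n34
          | exact fun h => n01 h.symm | exact fun h => n23 h.symm
          | exact fun h => n34 h.symm)

lemma noDiag {V : Type*} {G : SimpleGraph V} {v : Fin 4 → V} (hC : InducedC4 G v) :
    ∀ i : Fin 4, ¬ G.Adj (v i) (v (i + 2)) := by
  intro i
  fin_cases i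
  · exact hC.2.2.1
  · exact hC.2.2.2
  · exact fun h => hC.2.2.1 h.symm
  · exact fun h => hC.2.2.2 h.symm

lemma caseEven {V : Type*} {G : SimpleGraph V} (h2 : InducedFree p2p3ᶜ G)
    (v : Fin 4 → V) (hC : InducedC4 G v) (i : Fin 4) (b x : V)
    (hbr : b ∉ Set.range v)
    (hb : ∀ j, G.Adj b (v j) ↔ (j = i ∨ j = i + 1))
    (hxr : x ∉ Set.range v)
    (hx0 : G.Adj x (v i)) (hx2 : G.Adj x (v (i + 2)))
    (hxn1 : ¬ G.Adj x (v (i + 1))) (hxn3 : ¬ G.Adj x (v (i + 3)))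
    (hbx : G.Adj b x) : False := by
  have h11 : i + 1 + 1 = i + 2 := by fin_cases i <;> rfl
  refine nocomp h2 ![v (i+1), x, v i, v (i+2), b]
    ?_ ?_ ?_ ?_ ?_ ?_ ?_ ?_ ?_ ?_ ?_ ?_ ?_ <;>
    simp only [Matrix.cons_val_zero, Matrix.cons_val_one, Matrix.head_cons,
      Matrix.cons_val_two, Matrix.tail_cons, Matrix.cons_val_three, Matrix.cons_val_four]
  · exact (hC.2.1 i).symm
  · exact h11 ▸ hC.2.1 (i + 1)
  · exact ((hb (i+1)).mpr (Or.inr rfl)).symm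
  · exact hx0
  · exact hx2
  · exact hbx.symm
  · exact ((hb i).mpr (Or.inl rfl)).symm
  · exact fun h => hxn1 h.symm
  · exact noDiag hC i
  · exact fun h => absurd ((hb (i+2)).mp h.symm)
      ((by decide : ∀ i : Fin 4, ¬(i + 2 = i ∨ i + 2 = i + 1)) i)
  · exact fun h => hxr ⟨i + 1, h⟩
  · exact fun h => absurd (hC.1 h) ((by decide : ∀ i : Fin 4, ¬ i = i + 2) i)
  · exact fun h => hbr ⟨i + 2, h⟩

lemma caseOdd {V : Type*} {G : SimpleGraph V} (h2 : InducedFree p2p3ᶜ G)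
    (v : Fin 4 → V) (hC : InducedC4 G v) (i : Fin 4) (b x : V)
    (hbr : b ∉ Set.range v)
    (hb : ∀ j, G.Adj b (v j) ↔ (j = i ∨ j = i + 1))
    (hxr : x ∉ Set.range v)
    (hx1 : G.Adj x (v (i + 1))) (hx3 : G.Adj x (v (i + 3)))
    (hxn0 : ¬ G.Adj x (v i)) (hxn2 : ¬ G.Adj x (v (i + 2)))
    (hbx : G.Adj b x) : False := by
  have h31 : i + 3 + 1 = i := by fin_cases i <;> rfl
  have h12 : i + 1 + 2 = i + 3 := by fin_cases i <;> rfl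
  refine nocomp h2 ![x, v i, v (i+1), v (i+3), b]
    ?_ ?_ ?_ ?_ ?_ ?_ ?_ ?_ ?_ ?_ ?_ ?_ ?_ <;>
    simp only [Matrix.cons_val_zero, Matrix.cons_val_one, Matrix.head_cons,
      Matrix.cons_val_two, Matrix.tail_cons, Matrix.cons_val_three, Matrix.cons_val_four]
  · exact hx1
  · exact hx3
  · exact hbx.symm
  · exact hC.2.1 i
  · exact (h31 ▸ hC.2.1 (i + 3)).symm
  · exact ((hb i).mpr (Or.inl rfl)).symm
  · exact ((hb (i+1)).mpr (Or.inr rfl)).symm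
  · exact hxn0
  · exact h12 ▸ noDiag hC (i + 1)
  · exact fun h => absurd ((hb (i+3)).mp h.symm) ((by decide : ∀ i : Fin 4, ¬(i + 3 = i ∨ i + 3 = i + 1)) i)
  · exact fun h => hxr ⟨i, h.symm⟩
  · exact fun h => absurd (hC.1 h) ((by decide : ∀ i : Fin 4, ¬ i + 1 = i + 3) i)
  · exact fun h => hbr ⟨i + 3, h⟩

theorem stmt5 {V : Type*} (G : SimpleGraph V)
    (h1 : InducedFree p2p3 G) (h2 : InducedFree p2p3ᶜ G)
    (v : Fin 4 → V) (hC : InducedC4 G v) :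
    ∀ b ∈ (⋃ i : Fin 4, vertB G v i), ∀ x ∈ vertX G v 0 ∪ vertX G v 1, ¬ G.Adj b x := by
  intro b hb x hx hbx
  rw [Set.mem_iUnion] at hb
  obtain ⟨i, hbr, hbadj⟩ := hb
  rcases hx with ⟨hxr, hxadj⟩ | ⟨hxr, hxadj⟩ <;> fin_cases i <;>
    first
      | exact caseEven h2 v hC _ b x hbr hbadj hxr
          ((hxadj _).mpr (by decide)) ((hxadj _).mpr (by decide))
          (fun h => absurd ((hxadj _).mp h) (by decide))
          (fun h => absurd ((hxadj _).mp h) (by decide)) hbx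
      | exact caseOdd h2 v hC _ b x hbr hbadj hxr
          ((hxadj _).mpr (by decide)) ((hxadj _).mpr (by decide))
          (fun h => absurd ((hxadj _).mp h) (by decide))
          (fun h => absurd ((hxadj _).mp h) (by decide)) hbx
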